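/- For n = 3 the inequality ∏_{i=1}^{3}(x_i² + 2) ≥ 3·(x₁ + x₂ + x₃)² holds for all real x₁, x₂, x₃. -/
import Mathlib


theorem stmt_15 (x₁ x₂ x₃ : ℝ) :
    3 * (x₁ + x₂ + x₃) ^ 2 ≤ (x₁ ^ 2 + 2) * (x₂ ^ 2 + 2) * (x₃ ^ 2 + 2) := by
  have h1 : (3:ℝ)/2 * ((x₁ + x₂)^2 + 2) ≤ (x₁^2 + 2) * (x₂^2 + 2) := by
    nlinarith [sq_nonneg (x₁*x₂ - 1), sq_nonneg (x₁ - x₂)]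
  have h2 : 2 * (x₁ + x₂ + x₃)^2 ≤ ((x₁ + x₂)^2 + 2) * (x₃^2 + 2) := by
    nlinarith [sq_nonneg ((x₁ + x₂)*x₃ - 2), sq_nonneg (x₁ + x₂ - x₃)]
  nlinarith [sq_nonneg (x₁ + x₂ + x₃), sq_nonneg x₃, h1, h2, sq_nonneg ((x₁+x₂)^2 + 2)]
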